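/- arXiv:1508.01550 — 3 statements merged into one kernel-verified Lean document; each statement's English description precedes it below -/
import Mathlib

section
/- Let d ≥ 1 be an integer, μ > 0, 0 < β < 1, 0 < γ < 1 with β + γ > 1, κ = 2β/(2β+γ−1) and α_c = 1/(2β+γ−1), and let a : ℝ^d → [0,∞) be bounded, measurable, compactly supported and continuous at 0. Then for every t > 0 and x ∈ ℝ^d: lim_{ε→0⁺} ε^{2−2κ} ∫_{ℝ^d} (a(p)/|p|^{2γ+d−2}) e^{−μ|p|^{2β} t/ε^κ} e^{ip·x/ε^{α_c}} dp = ∫_{ℝ^d} (a(0)/|p|^{2γ+d−2}) e^{−μ|p|^{2β} t} e^{ip·x} dp. -/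
open MeasureTheory

open Set Metric in

lemma aux_oneD {s p b : ℝ} (hs : -1 < s) (hp : 0 < p) (hb : 0 < b) :
    IntegrableOn (fun y : ℝ => y ^ s * Real.exp (-(b * y ^ p))) (Set.Ioi 0) := by
  have hmeas : Measurable (fun y : ℝ => y ^ s * Real.exp (-(b * y ^ p))) := by
    fun_prop
  have h1 : IntegrableOn (fun y : ℝ => y ^ s * Real.exp (-(b * y ^ p))) (Set.Ioc 0 1) := by
    have hrs : IntegrableOn (fun y : ℝ => y ^ s) (Set.Ioc 0 1) := by
      have := intervalIntegral.intervalIntegrable_rpow' (r := s) hs (a := 0) (b := 1)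
      rwa [intervalIntegrable_iff_integrableOn_Ioc_of_le zero_le_one] at this
    refine hrs.mono' (hmeas.aestronglyMeasurable.restrict) ?_
    filter_upwards [ae_restrict_mem measurableSet_Ioc] with y hy
    have hy0 : 0 < y := hy.1
    have h1 : Real.exp (-(b * y ^ p)) ≤ 1 := by
      rw [Real.exp_le_one_iff]
      have : 0 ≤ b * y ^ p := by positivity
      linarith
    have h2 : 0 ≤ y ^ s := Real.rpow_nonneg hy0.le s
    rw [Real.norm_eq_abs, abs_of_nonneg (by positivity)]
    nlinarith [Real.exp_pos (-(b * y ^ p))]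
  have h2 : IntegrableOn (fun y : ℝ => y ^ s * Real.exp (-(b * y ^ p))) (Set.Ioi 1) := by
    set k : ℕ := ⌈(s + 1) / p⌉₊ + 1 with hk
    have hklt : s - p * k < -1 := by
      have h1 : (s + 1) / p ≤ (⌈(s + 1) / p⌉₊ : ℝ) := Nat.le_ceil _
      have h2 : (s + 1) / p < k := by
        rw [hk]; push_cast; linarith
      have := (div_lt_iff₀ hp).mp h2
      nlinarith
    have hint : IntegrableOn (fun y : ℝ => (Nat.factorial k / b ^ k) * y ^ (s - p * k))
        (Set.Ioi 1) :=
      (integrableOn_Ioi_rpow_of_lt hklt one_pos).const_mul _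
    refine hint.mono' (hmeas.aestronglyMeasurable.restrict) ?_
    filter_upwards [ae_restrict_mem measurableSet_Ioi] with y hy
    have hy1 : (1 : ℝ) < y := hy
    have hy0 : 0 < y := lt_trans one_pos hy1
    have hyp : 0 < y ^ p := Real.rpow_pos_of_pos hy0 p
    have hbyp : 0 < b * y ^ p := by positivity
    have hexp : (b * y ^ p) ^ k / Nat.factorial k ≤ Real.exp (b * y ^ p) := by
      calc (b * y ^ p) ^ k / Nat.factorial k
          ≤ ∑ i ∈ Finset.range (k + 1), (b * y ^ p) ^ i / Nat.factorial i := by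
            refine Finset.single_le_sum (f := fun i => (b * y ^ p) ^ i / (Nat.factorial i : ℝ))
              (fun i _ => by positivity) (Finset.self_mem_range_succ k)
        _ ≤ Real.exp (b * y ^ p) := Real.sum_le_exp_of_nonneg hbyp.le _
    have hexpneg : Real.exp (-(b * y ^ p)) ≤ Nat.factorial k / (b * y ^ p) ^ k := by
      rw [Real.exp_neg]
      have h0 : 0 < (b * y ^ p) ^ k / Nat.factorial k := by positivity
      calc (Real.exp (b * y ^ p))⁻¹ ≤ ((b * y ^ p) ^ k / Nat.factorial k)⁻¹ := by
            exact inv_anti₀ h0 hexp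
        _ = Nat.factorial k / (b * y ^ p) ^ k := by rw [inv_div]
    have hyk : (y ^ p) ^ k = y ^ (p * k) := by
      rw [← Real.rpow_natCast (y ^ p) k, ← Real.rpow_mul hy0.le]
    rw [Real.norm_eq_abs, abs_of_nonneg (by positivity)]
    calc y ^ s * Real.exp (-(b * y ^ p))
        ≤ y ^ s * (Nat.factorial k / (b * y ^ p) ^ k) := by
          exact mul_le_mul_of_nonneg_left hexpneg (Real.rpow_nonneg hy0.le s)
      _ = Nat.factorial k / b ^ k * y ^ (s - p * k) := by
          rw [mul_pow, hyk, Real.rpow_sub hy0]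
          have h1 : (0:ℝ) < y ^ (p * (k:ℝ)) := Real.rpow_pos_of_pos hy0 _
          have h2 : (0:ℝ) < b ^ k := by positivity
          field_simp
  have := h1.union h2
  rwa [Set.Ioc_union_Ioi_eq_Ioi zero_le_one] at this

open Set Metric in

lemma aux_radial {d : ℕ} (hd : 1 ≤ d) {f : ℝ → ℝ} (hf : Measurable f)
    (hint : IntegrableOn (fun y : ℝ => f y * y ^ (d - 1)) (Set.Ioi 0)) :
    Integrable (fun q : EuclideanSpace ℝ (Fin d) => f ‖q‖) := by
  set E := EuclideanSpace ℝ (Fin d)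
  haveI : Nonempty (Fin d) := ⟨⟨0, hd⟩⟩
  haveI : Nontrivial E := by
    refine nontrivial_of_ne (EuclideanSpace.single ⟨0, hd⟩ 1) 0 ?_
    intro h
    have := congrArg (fun v : EuclideanSpace ℝ (Fin d) => v ⟨0, hd⟩) h
    exact one_ne_zero (α := ℝ) (by simpa [EuclideanSpace.single] using this)
  have hdim : Module.finrank ℝ E = d := finrank_euclideanSpace_fin
  -- Step 1: integrability w.r.t. volumeIoiPow (d - 1)
  have step1 : Integrable (fun y : Set.Ioi (0:ℝ) => f y)
      (Measure.volumeIoiPow (Module.finrank ℝ E - 1)) := by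
    rw [hdim, Measure.volumeIoiPow]
    rw [integrable_withDensity_iff (by fun_prop) (ae_of_all _ fun y => ENNReal.ofReal_lt_top)]
    have h0 : Integrable ((fun y : ℝ => f y * y ^ (d - 1)) ∘ (Subtype.val : Set.Ioi (0:ℝ) → ℝ))
        ((volume : Measure ℝ).comap Subtype.val) := by
      have h1 := hint
      rw [IntegrableOn, ← map_comap_subtype_coe measurableSet_Ioi] at h1
      exact ((MeasurableEmbedding.subtype_coe measurableSet_Ioi).integrable_map_iff).mp h1
    refine h0.congr ?_
    refine ae_of_all _ fun y => ?_
    simp only [Function.comp]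
    rw [ENNReal.toReal_ofReal (pow_nonneg (le_of_lt y.2) _)]
  -- Step 2: integrability on the product
  have step2 : Integrable (fun z : sphere (0:E) 1 × Set.Ioi (0:ℝ) => f z.2)
      ((volume : Measure E).toSphere.prod (Measure.volumeIoiPow (Module.finrank ℝ E - 1))) := by
    have h2 := step1.smul_measure (c := (volume : Measure E).toSphere Set.univ)
      (measure_ne_top _ _)
    rw [← Measure.map_snd_prod] at h2
    exact (integrable_map_measure h2.aestronglyMeasurable measurable_snd.aemeasurable).mp h2
  -- Step 3: pull back through the measure-preserving homeomorphism
  have mp := (volume : Measure E).measurePreserving_homeomorphUnitSphereProd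
  have step3 := (mp.integrable_comp_emb (homeomorphUnitSphereProd E).measurableEmbedding).mpr step2
  have step4 : Integrable (fun q : ({0}ᶜ : Set E) => f ‖(q : E)‖)
      ((volume : Measure E).comap Subtype.val) := by
    refine step3.congr (ae_of_all _ fun q => ?_)
    simp [Function.comp]
  -- Step 4: back to E
  have h5 : Integrable ((fun q : E => f ‖q‖) ∘ (Subtype.val : ({0}ᶜ : Set E) → E))
      ((volume : Measure E).comap Subtype.val) := step4
  have h6 := ((MeasurableEmbedding.subtype_coe
      (measurableSet_singleton (0:E)).compl).integrable_map_iff).mpr h5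
  rw [map_comap_subtype_coe (measurableSet_singleton (0:E)).compl,
    restrict_compl_singleton] at h6
  exact h6

open Set in
lemma aux_int (d : ℕ) (hd : 1 ≤ d) {s b p : ℝ} (hsd : s < d) (hb : 0 < b) (hp : 0 < p) :
    Integrable (fun q : EuclideanSpace ℝ (Fin d) =>
      (‖q‖ ^ s)⁻¹ * Real.exp (-(b * ‖q‖ ^ p))) := by
  have hmeas : Measurable (fun y : ℝ => (y ^ s)⁻¹ * Real.exp (-(b * y ^ p))) := by fun_prop
  apply aux_radial hd hmeas
  have h := aux_oneD (s := (d : ℝ) - 1 - s) (by linarith) hp hb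
  refine h.congr_fun (fun y hy => ?_) measurableSet_Ioi
  have hy0 : (0:ℝ) < y := hy
  have hcast : ((d - 1 : ℕ) : ℝ) = (d : ℝ) - 1 := by
    rw [Nat.cast_sub hd]; norm_num
  have hkey : y ^ ((d:ℝ) - 1 - s) = (y ^ s)⁻¹ * y ^ (d - 1) := by
    rw [← Real.rpow_natCast y (d - 1), ← Real.rpow_neg hy0.le, ← Real.rpow_add hy0, hcast]
    ring_nf
  beta_reduce; rw [hkey]; ring

/-- At the critical wavelength exponent `α_c`, the rescaled covariance converges:
`lim_{ε→0⁺} ε^{2-2κ} ∫ (a(p)/|p|^{2γ+d-2}) e^{-μ|p|^{2β}t/ε^κ} e^{ip·x/ε^{α_c}} dp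
  = ∫ (a(0)/|p|^{2γ+d-2}) e^{-μ|p|^{2β}t} e^{ip·x} dp`. -/
theorem stmt_6 (d : ℕ) (hd : 1 ≤ d) (μ β γ κ αc : ℝ) (hμ : 0 < μ) (hβ0 : 0 < β)
    (hβ1 : β < 1) (hγ0 : 0 < γ) (hγ1 : γ < 1) (hβγ : 1 < β + γ)
    (hκ : κ = 2 * β / (2 * β + γ - 1)) (hαc : αc = 1 / (2 * β + γ - 1))
    (a : EuclideanSpace ℝ (Fin d) → ℝ) (ha0 : ∀ p, 0 ≤ a p)
    (haB : ∃ C, ∀ p, a p ≤ C) (haM : Measurable a) (haCS : HasCompactSupport a)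
    (haCont : ContinuousAt a 0)
    (t : ℝ) (ht : 0 < t) (x : EuclideanSpace ℝ (Fin d)) :
    Filter.Tendsto (fun ε : ℝ =>
        ((ε ^ (2 - 2 * κ) : ℝ) : ℂ) *
          ∫ p : EuclideanSpace ℝ (Fin d),
            ((a p / ‖p‖ ^ (2 * γ + d - 2)
                * Real.exp (-(μ * ‖p‖ ^ (2 * β) * t / ε ^ κ)) : ℝ) : ℂ)
              * Complex.exp (Complex.I * (((inner ℝ p x : ℝ) / ε ^ αc : ℝ) : ℂ)))
      (nhdsWithin 0 (Set.Ioi 0))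
      (nhds (∫ p : EuclideanSpace ℝ (Fin d),
          ((a 0 / ‖p‖ ^ (2 * γ + d - 2) * Real.exp (-(μ * ‖p‖ ^ (2 * β) * t)) : ℝ) : ℂ)
            * Complex.exp (Complex.I * ((inner ℝ p x : ℝ) : ℂ)))) := by
  have hD : (0:ℝ) < 2 * β + γ - 1 := by linarith
  have hDne : (2 * β + γ - 1 : ℝ) ≠ 0 := ne_of_gt hD
  have hαc0 : 0 < αc := by rw [hαc]; positivity
  obtain ⟨C₀, hC₀⟩ := haB
  set C : ℝ := max C₀ 0 with hC
  have hCb : ∀ p, a p ≤ C := fun p => (hC₀ p).trans (le_max_left _ _)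
  have hC0 : 0 ≤ C := le_max_right _ _
  set s : ℝ := 2 * γ + d - 2 with hs
  haveI : Nontrivial (EuclideanSpace ℝ (Fin d)) := by
    refine nontrivial_of_ne (EuclideanSpace.single ⟨0, hd⟩ 1) 0 ?_
    intro h
    have := congrArg (fun v : EuclideanSpace ℝ (Fin d) => v ⟨0, hd⟩) h
    have h1 : (1:ℝ) = 0 := by simpa [EuclideanSpace.single] using this
    exact one_ne_zero h1
  have hsd : s < d := by rw [hs]; push_cast; linarith
  set G : ℝ → EuclideanSpace ℝ (Fin d) → ℂ := fun c q =>
    ((a (c • q) / ‖q‖ ^ s * Real.exp (-(μ * ‖q‖ ^ (2 * β) * t)) : ℝ) : ℂ) *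
      Complex.exp (Complex.I * ((inner ℝ q x : ℝ) : ℂ)) with hG
  -- measurability
  have hmeasG : ∀ c : ℝ, AEStronglyMeasurable (G c) volume := by
    intro c
    refine Measurable.aestronglyMeasurable ?_
    simp only [hG]
    have m_inner : Measurable fun q : EuclideanSpace ℝ (Fin d) => (inner ℝ q x : ℝ) :=
      (continuous_id.inner continuous_const).measurable
    have m1 : Measurable fun q : EuclideanSpace ℝ (Fin d) => a (c • q) := by
      exact haM.comp (measurable_const_smul c)
    have m2 : Measurable fun q : EuclideanSpace ℝ (Fin d) =>
        a (c • q) / ‖q‖ ^ s * Real.exp (-(μ * ‖q‖ ^ (2 * β) * t)) := by fun_prop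
    exact (Complex.measurable_ofReal.comp m2).mul
      (Complex.measurable_exp.comp
        (measurable_const.mul (Complex.measurable_ofReal.comp m_inner)))
  -- uniform bound
  have hbound : ∀ (c : ℝ) (q : EuclideanSpace ℝ (Fin d)),
      ‖G c q‖ ≤ C * ((‖q‖ ^ s)⁻¹ * Real.exp (-(μ * t * ‖q‖ ^ (2 * β)))) := by
    intro c q
    simp only [hG]
    rw [norm_mul]
    have h1 : ‖Complex.exp (Complex.I * ((inner ℝ q x : ℝ) : ℂ))‖ = 1 := by
      have hre : (Complex.I * ((inner ℝ q x : ℝ) : ℂ)).re = 0 := by simp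
      rw [Complex.norm_exp, hre, Real.exp_zero]
    rw [h1, mul_one, Complex.norm_real, Real.norm_eq_abs]
    have hnn : 0 ≤ a (c • q) / ‖q‖ ^ s * Real.exp (-(μ * ‖q‖ ^ (2 * β) * t)) :=
      mul_nonneg (div_nonneg (ha0 _) (Real.rpow_nonneg (norm_nonneg _) _)) (Real.exp_pos _).le
    rw [abs_of_nonneg hnn]
    have h2 : a (c • q) / ‖q‖ ^ s ≤ C * (‖q‖ ^ s)⁻¹ := by
      rw [div_eq_mul_inv]
      exact mul_le_mul_of_nonneg_right (hCb _) (by positivity)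
    calc a (c • q) / ‖q‖ ^ s * Real.exp (-(μ * ‖q‖ ^ (2 * β) * t))
        ≤ C * (‖q‖ ^ s)⁻¹ * Real.exp (-(μ * ‖q‖ ^ (2 * β) * t)) :=
          mul_le_mul_of_nonneg_right h2 (Real.exp_pos _).le
      _ = C * ((‖q‖ ^ s)⁻¹ * Real.exp (-(μ * t * ‖q‖ ^ (2 * β)))) := by
          rw [show -(μ * ‖q‖ ^ (2 * β) * t) = -(μ * t * ‖q‖ ^ (2 * β)) by ring]
          ring
  -- pointwise limit
  have hlim : ∀ q : EuclideanSpace ℝ (Fin d), Filter.Tendsto (fun ε : ℝ => G (ε ^ αc) q)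
      (nhdsWithin 0 (Set.Ioi 0)) (nhds (G 0 q)) := by
    intro q
    have h1 : Filter.Tendsto (fun ε : ℝ => ε ^ αc) (nhdsWithin (0:ℝ) (Set.Ioi 0)) (nhds 0) := by
      have hc : ContinuousAt (fun ε : ℝ => ε ^ αc) 0 :=
        Real.continuousAt_rpow_const 0 αc (Or.inr hαc0.le)
      have h := hc.tendsto
      rw [Real.zero_rpow (ne_of_gt hαc0)] at h
      exact h.mono_left nhdsWithin_le_nhds
    have h2 : Filter.Tendsto (fun c : ℝ => a (c • q)) (nhds 0) (nhds (a ((0:ℝ) • q))) := by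
      have hsm : Filter.Tendsto (fun c : ℝ => c • q) (nhds (0:ℝ)) (nhds 0) := by
        have hcont : Continuous (fun c : ℝ => c • q) := continuous_id.smul continuous_const
        have h := hcont.tendsto 0
        rwa [zero_smul] at h
      rw [zero_smul]
      exact haCont.tendsto.comp hsm
    have h3 : Filter.Tendsto (fun ε : ℝ => a ((ε ^ αc) • q)) (nhdsWithin 0 (Set.Ioi 0))
        (nhds (a ((0:ℝ) • q))) := h2.comp h1
    simp only [hG]
    exact ((Complex.continuous_ofReal.tendsto _).comp
      ((h3.div_const _).mul_const _)).mul_const _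
  -- convergence of integrals
  have T1 : Filter.Tendsto (fun ε : ℝ => ∫ q : EuclideanSpace ℝ (Fin d), G (ε ^ αc) q)
      (nhdsWithin 0 (Set.Ioi 0)) (nhds (∫ q : EuclideanSpace ℝ (Fin d), G 0 q)) := by
    refine tendsto_integral_filter_of_dominated_convergence
      (fun q => C * ((‖q‖ ^ s)⁻¹ * Real.exp (-(μ * t * ‖q‖ ^ (2 * β))))) ?_ ?_ ?_ ?_
    · exact Filter.Eventually.of_forall fun ε => hmeasG _
    · exact Filter.Eventually.of_forall fun ε => ae_of_all _ fun q => hbound _ q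
    · exact (aux_int d hd hsd (mul_pos hμ ht) (by positivity)).const_mul C
    · exact ae_of_all _ fun q => hlim q
  -- identify the limit
  have hG0 : (∫ q : EuclideanSpace ℝ (Fin d), G 0 q) = ∫ p : EuclideanSpace ℝ (Fin d),
      ((a 0 / ‖p‖ ^ s * Real.exp (-(μ * ‖p‖ ^ (2 * β) * t)) : ℝ) : ℂ) *
        Complex.exp (Complex.I * ((inner ℝ p x : ℝ) : ℂ)) := by
    simp only [hG, zero_smul]
  -- eventual equality with the original expression
  have T2 : (fun ε : ℝ => ∫ q : EuclideanSpace ℝ (Fin d), G (ε ^ αc) q)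
      =ᶠ[nhdsWithin (0:ℝ) (Set.Ioi 0)]
      (fun ε : ℝ =>
        ((ε ^ (2 - 2 * κ) : ℝ) : ℂ) *
          ∫ p : EuclideanSpace ℝ (Fin d),
            ((a p / ‖p‖ ^ s * Real.exp (-(μ * ‖p‖ ^ (2 * β) * t / ε ^ κ)) : ℝ) : ℂ)
              * Complex.exp (Complex.I * (((inner ℝ p x : ℝ) / ε ^ αc : ℝ) : ℂ))) := by
    filter_upwards [self_mem_nhdsWithin] with ε hε
    have hε0 : (0:ℝ) < ε := hε
    have hεκ : (0:ℝ) < ε ^ κ := Real.rpow_pos_of_pos hε0 κ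
    set c : ℝ := ε ^ αc with hc
    have hcpos : 0 < c := Real.rpow_pos_of_pos hε0 αc
    set F : EuclideanSpace ℝ (Fin d) → ℂ := fun p =>
      ((a p / ‖p‖ ^ s * Real.exp (-(μ * ‖p‖ ^ (2 * β) * t / ε ^ κ)) : ℝ) : ℂ)
        * Complex.exp (Complex.I * (((inner ℝ p x : ℝ) / c : ℝ) : ℂ)) with hF
    have hcs := MeasureTheory.Measure.integral_comp_smul
      (μ := (volume : Measure (EuclideanSpace ℝ (Fin d)))) F c
    rw [show Module.finrank ℝ (EuclideanSpace ℝ (Fin d)) = d from finrank_euclideanSpace_fin]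
      at hcs
    have h4 : (∫ p : EuclideanSpace ℝ (Fin d), F p)
        = (c ^ d : ℝ) • ∫ q : EuclideanSpace ℝ (Fin d), F (c • q) := by
      rw [hcs, smul_smul, abs_of_pos (by positivity : (0:ℝ) < (c ^ d)⁻¹),
        mul_inv_cancel₀ (by positivity : (c ^ d : ℝ) ≠ 0), one_smul]
    have key : (∫ q : EuclideanSpace ℝ (Fin d), G c q) =
        ((ε ^ (2 - 2 * κ) : ℝ) : ℂ) * ∫ p : EuclideanSpace ℝ (Fin d), F p := by
      rw [h4, Complex.real_smul, ← mul_assoc, ← Complex.ofReal_mul, ← integral_const_mul]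
      refine (integral_congr_ae ?_).symm
      have h0 : ∀ᵐ q : EuclideanSpace ℝ (Fin d) ∂volume, q ≠ 0 := by
        have hc0 := (Set.countable_singleton (0:EuclideanSpace ℝ (Fin d))).ae_notMem
          (volume : Measure (EuclideanSpace ℝ (Fin d)))
        filter_upwards [hc0] with q hq
        simpa using hq
      filter_upwards [h0] with q hq
      have hn : 0 < ‖q‖ := norm_pos_iff.mpr hq
      have hns : (0:ℝ) < ‖q‖ ^ s := Real.rpow_pos_of_pos hn s
      have hcs' : (0:ℝ) < c ^ s := Real.rpow_pos_of_pos hcpos s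
      have h1 : ‖c • q‖ = c * ‖q‖ := by
        rw [norm_smul, Real.norm_eq_abs, abs_of_pos hcpos]
      have h2 : ‖c • q‖ ^ s = c ^ s * ‖q‖ ^ s := by
        rw [h1, Real.mul_rpow hcpos.le (norm_nonneg q)]
      have hκαc : αc * (2 * β) = κ := by rw [hκ, hαc]; ring
      have h3 : ‖c • q‖ ^ (2 * β) = ε ^ κ * ‖q‖ ^ (2 * β) := by
        rw [h1, Real.mul_rpow hcpos.le (norm_nonneg q), hc, ← Real.rpow_mul hε0.le, hκαc]
      have h5 : μ * ‖c • q‖ ^ (2 * β) * t / ε ^ κ = μ * ‖q‖ ^ (2 * β) * t := by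
        rw [h3]; field_simp
      have h6 : ((inner ℝ (c • q) x : ℝ)) / c = (inner ℝ q x : ℝ) := by
        rw [real_inner_smul_left, mul_div_cancel_left₀ _ hcpos.ne']
      have h7 : ε ^ (2 - 2 * κ) * c ^ d = c ^ s := by
        rw [hc, ← Real.rpow_natCast (ε ^ αc) d, ← Real.rpow_mul hε0.le,
          ← Real.rpow_mul hε0.le, ← Real.rpow_add hε0]
        congr 1
        rw [hκ, hαc, hs]
        field_simp
        ring
      simp only [hF, hG]
      rw [h2, h5, h6, ← mul_assoc]
      congr 1
      rw [← Complex.ofReal_mul]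
      congr 1
      rw [← mul_assoc, h7]
      field_simp
    exact key
  have hfinal := T1.congr' T2
  rwa [hG0] at hfinal
end

section
/- Let d ≥ 1 be an integer, μ > 0, 0 < β < 1, 0 < γ < 1 with β + γ > 1, κ = 2β/(2β+γ−1) and α_c = 1/(2β+γ−1), let 0 < α < α_c, and let a : ℝ^d → [0,∞) be bounded, measurable, compactly supported and continuous at 0. Then for every t > 0 and x ∈ ℝ^d: lim_{ε→0⁺} ε^{2−2κ} ∫_{ℝ^d} (a(p)/|p|^{2γ+d−2}) e^{−μ|p|^{2β} t/ε^κ} e^{ip·x/ε^{α}} dp = a(0) K₁ t^{−(1−γ)/β}, where K₁ = Ω_d ∫₀^∞ e^{−μ ρ^{2β}} ρ^{1−2γ} dρ and Ω_d is the surface area of the unit sphere in ℝ^d. In particular the limit does not depend on x. -/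
open MeasureTheory

/-- The surface area `Ω_d` of the unit sphere in `ℝ^d`, expressed as `d` times the
volume of the unit ball. -/
noncomputable def unitSphereArea (d : ℕ) : ℝ :=
  d * (volume (Metric.ball (0 : EuclideanSpace ℝ (Fin d)) 1)).toReal

open Real Set Metric


lemma aux_intOn {p s b : ℝ} (hp : 0 < p) (hs : -1 < s) (hb : 0 < b) :
    IntegrableOn (fun x : ℝ => x ^ s * Real.exp (-(b * x ^ p))) (Set.Ioi 0) := by
  have hs' : -1 < (s + 1) / p - 1 := by
    have : 0 < (s + 1) / p := div_pos (by linarith) hp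
    linarith
  have h1 : IntegrableOn (fun u : ℝ => u ^ ((s + 1) / p - 1) * Real.exp (-b * u ^ (1 : ℝ)))
      (Set.Ioi 0) := integrableOn_rpow_mul_exp_neg_mul_rpow hs' zero_lt_one hb
  have h1' : IntegrableOn (fun u : ℝ => u ^ ((s + 1) / p - 1) * Real.exp (-b * u))
      (Set.Ioi 0) := by
    refine h1.congr_fun (fun u hu => ?_) measurableSet_Ioi
    beta_reduce
    rw [Real.rpow_one]
  have h2 := (integrableOn_Ioi_comp_rpow_iff'
      (fun u : ℝ => u ^ ((s + 1) / p - 1) * Real.exp (-b * u)) hp.ne').mpr h1'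
  refine h2.congr_fun (fun x hx => ?_) measurableSet_Ioi
  have hx0 : (0 : ℝ) < x := hx
  beta_reduce
  rw [smul_eq_mul, ← mul_assoc, ← Real.rpow_mul hx0.le, ← Real.rpow_add hx0, neg_mul]
  congr 2
  field_simp
  ring

open Metric in
lemma aux_polar_integrable (d : ℕ) (hd : 1 ≤ d) {h : ℝ → ℝ}
    (hint : IntegrableOn (fun y : ℝ => y ^ (d - 1 : ℕ) * h y) (Set.Ioi 0)) :
    Integrable (fun x : EuclideanSpace ℝ (Fin d) => h ‖x‖) := by
  haveI : Nonempty (Fin d) := ⟨⟨0, hd⟩⟩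
  haveI : Nontrivial (EuclideanSpace ℝ (Fin d)) := inferInstance
  have hdim : Module.finrank ℝ (EuclideanSpace ℝ (Fin d)) = d := finrank_euclideanSpace_fin
  -- integrability on (0,∞) with density
  have h2 : Integrable (fun y : Set.Ioi (0:ℝ) => h y.1) (Measure.volumeIoiPow (d - 1)) := by
    rw [Measure.volumeIoiPow]
    have hf : Measurable fun y : Set.Ioi (0:ℝ) => (y.1 ^ (d-1)).toNNReal :=
      (measurable_subtype_coe.pow_const _).real_toNNReal
    have : (fun r : Set.Ioi (0:ℝ) => ENNReal.ofReal (r.1 ^ (d-1)))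
        = fun r : Set.Ioi (0:ℝ) => ((r.1 ^ (d-1)).toNNReal : ENNReal) := rfl
    rw [this, integrable_withDensity_iff_integrable_smul hf]
    show Integrable ((fun r : ℝ => (r ^ (d-1)).toNNReal • h r) ∘ Subtype.val)
      (Measure.comap Subtype.val volume)
    rw [← (MeasurableEmbedding.subtype_coe measurableSet_Ioi).integrable_map_iff,
      map_comap_subtype_coe measurableSet_Ioi]
    refine (hint.congr_fun (fun r hr => ?_) measurableSet_Ioi)
    have hr0 : (0:ℝ) < r := hr
    simp [NNReal.smul_def, Real.coe_toNNReal _ (pow_nonneg hr0.le _)]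
  -- integrability over the product
  have h3 : Integrable (fun z : (Metric.sphere (0 : EuclideanSpace ℝ (Fin d)) 1) × Set.Ioi (0:ℝ) => h z.2.1)
      ((volume : Measure (EuclideanSpace ℝ (Fin d))).toSphere.prod
        (Measure.volumeIoiPow (Module.finrank ℝ (EuclideanSpace ℝ (Fin d)) - 1))) := by
    rw [hdim]
    have := (integrable_const (1:ℝ) :
        Integrable _ (volume : Measure (EuclideanSpace ℝ (Fin d))).toSphere).mul_prod h2
    simpa using this
  have h4 : Integrable (fun x : ({0}ᶜ : Set (EuclideanSpace ℝ (Fin d))) => h ‖x.1‖)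
      (volume.comap Subtype.val) := by
    have hmp := (volume : Measure (EuclideanSpace ℝ (Fin d))).measurePreserving_homeomorphUnitSphereProd
    have := (hmp.integrable_comp_emb (Homeomorph.measurableEmbedding _)
      (g := fun z : (Metric.sphere (0 : EuclideanSpace ℝ (Fin d)) 1) × Set.Ioi (0:ℝ) => h z.2.1)).mpr h3
    simpa [Function.comp_def, homeomorphUnitSphereProd] using this
  have h5 : IntegrableOn (fun x : EuclideanSpace ℝ (Fin d) => h ‖x‖) ({0}ᶜ) volume := by
    rw [IntegrableOn, ← map_comap_subtype_coe (measurableSet_singleton (0:EuclideanSpace ℝ (Fin d))).compl,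
      (MeasurableEmbedding.subtype_coe (measurableSet_singleton _).compl).integrable_map_iff]
    exact h4
  rw [IntegrableOn, MeasureTheory.restrict_compl_singleton (μ := volume)] at h5
  exact h5


lemma aux_meas_norm_rpow (d : ℕ) (r : ℝ) :
    Measurable fun q : EuclideanSpace ℝ (Fin d) => ‖q‖ ^ r := by
  classical
  have : (fun q : EuclideanSpace ℝ (Fin d) => ‖q‖ ^ r)
      = Set.piecewise ({0} : Set (EuclideanSpace ℝ (Fin d))) (fun _ => (0:ℝ) ^ r)
        (fun q => Real.exp (Real.log ‖q‖ * r)) := by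
    funext q
    by_cases hq : q = 0
    · simp [hq]
    · rw [Set.piecewise_eq_of_notMem _ _ _ (by simpa using hq),
        Real.rpow_def_of_pos (norm_pos_iff.mpr hq)]
  rw [this]
  exact Measurable.piecewise (measurableSet_singleton 0) measurable_const
    (Real.measurable_exp.comp ((Real.measurable_log.comp measurable_norm).mul measurable_const))


/-- Below the critical wavelength exponent (`0 < α < α_c`), the rescaled covariance
converges to the spatially frozen limit `a(0) K₁ t^{-(1-γ)/β}`, independent of `x`. -/
theorem stmt_7 (d : ℕ) (hd : 1 ≤ d) (μ β γ κ αc α : ℝ) (hμ : 0 < μ) (hβ0 : 0 < β)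
    (hβ1 : β < 1) (hγ0 : 0 < γ) (hγ1 : γ < 1) (hβγ : 1 < β + γ)
    (hκ : κ = 2 * β / (2 * β + γ - 1)) (hαc : αc = 1 / (2 * β + γ - 1))
    (hα0 : 0 < α) (hααc : α < αc)
    (a : EuclideanSpace ℝ (Fin d) → ℝ) (ha0 : ∀ p, 0 ≤ a p)
    (haB : ∃ C, ∀ p, a p ≤ C) (haM : Measurable a) (haCS : HasCompactSupport a)
    (haCont : ContinuousAt a 0)
    (K₁ : ℝ) (hK₁ : K₁ = unitSphereArea d *
      ∫ ρ in Set.Ioi (0 : ℝ), Real.exp (-(μ * ρ ^ (2 * β))) * ρ ^ (1 - 2 * γ))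
    (t : ℝ) (ht : 0 < t) (x : EuclideanSpace ℝ (Fin d)) :
    Filter.Tendsto (fun ε : ℝ =>
        ((ε ^ (2 - 2 * κ) : ℝ) : ℂ) *
          ∫ p : EuclideanSpace ℝ (Fin d),
            ((a p / ‖p‖ ^ (2 * γ + d - 2)
                * Real.exp (-(μ * ‖p‖ ^ (2 * β) * t / ε ^ κ)) : ℝ) : ℂ)
              * Complex.exp (Complex.I * (((inner ℝ p x : ℝ) / ε ^ α : ℝ) : ℂ)))
      (nhdsWithin 0 (Set.Ioi 0))
      (nhds ((a 0 * K₁ * t ^ (-(1 - γ) / β) : ℝ) : ℂ)) := by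
  haveI : Nonempty (Fin d) := ⟨⟨0, hd⟩⟩
  haveI : Nontrivial (EuclideanSpace ℝ (Fin d)) := inferInstance
  have hdim : Module.finrank ℝ (EuclideanSpace ℝ (Fin d)) = d := finrank_euclideanSpace_fin
  have hD : (0:ℝ) < 2 * β + γ - 1 := by linarith
  have hβ2 : (0:ℝ) < 2 * β := by linarith
  have hκ0 : 0 < κ := by rw [hκ]; positivity
  set r : ℝ := 2 * γ + d - 2 with hr
  set l := nhdsWithin (0:ℝ) (Set.Ioi 0) with hl
  set lam : ℝ → ℝ := fun ε => (ε ^ κ / t) ^ (1 / (2 * β)) with hlam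
  set g : ℝ → EuclideanSpace ℝ (Fin d) → ℂ := fun ε q =>
    ((a (lam ε • q) / ‖q‖ ^ r * Real.exp (-(μ * ‖q‖ ^ (2 * β))) : ℝ) : ℂ) *
      Complex.exp (Complex.I * ((lam ε * (inner ℝ q x : ℝ) / ε ^ α : ℝ) : ℂ)) with hg
  have hlampos : ∀ ε : ℝ, ε ∈ Set.Ioi (0:ℝ) → 0 < lam ε := fun ε hε =>
    Real.rpow_pos_of_pos (div_pos (Real.rpow_pos_of_pos hε κ) ht) _
  -- the limit integrand
  set f : EuclideanSpace ℝ (Fin d) → ℂ := fun q =>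
    ((a 0 / ‖q‖ ^ r * Real.exp (-(μ * ‖q‖ ^ (2 * β))) : ℝ) : ℂ) with hf
  -- Step A : change of variables
  have stepA : ∀ ε ∈ Set.Ioi (0:ℝ),
      ((ε ^ (2 - 2 * κ) : ℝ) : ℂ) *
          ∫ p : EuclideanSpace ℝ (Fin d),
            ((a p / ‖p‖ ^ r * Real.exp (-(μ * ‖p‖ ^ (2 * β) * t / ε ^ κ)) : ℝ) : ℂ)
              * Complex.exp (Complex.I * (((inner ℝ p x : ℝ) / ε ^ α : ℝ) : ℂ))
        = ((t ^ (-(1 - γ) / β) : ℝ) : ℂ) * ∫ q, g ε q := by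
    intro ε hε
    have hε0 : (0:ℝ) < ε := hε
    have hL : 0 < lam ε := hlampos ε hε
    have hεκ : (0:ℝ) < ε ^ κ := Real.rpow_pos_of_pos hε0 κ
    set F : EuclideanSpace ℝ (Fin d) → ℂ := fun p =>
      ((a p / ‖p‖ ^ r * Real.exp (-(μ * ‖p‖ ^ (2 * β) * t / ε ^ κ)) : ℝ) : ℂ)
        * Complex.exp (Complex.I * (((inner ℝ p x : ℝ) / ε ^ α : ℝ) : ℂ)) with hF
    have hL2β : lam ε ^ (2 * β) = ε ^ κ / t := by
      rw [hlam]
      show ((ε ^ κ / t) ^ (1 / (2 * β))) ^ (2 * β) = ε ^ κ / t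
      rw [← Real.rpow_mul (div_pos hεκ ht).le, one_div, inv_mul_cancel₀ hβ2.ne', Real.rpow_one]
    have key : ∀ q : EuclideanSpace ℝ (Fin d),
        F (lam ε • q) = ((lam ε ^ (-r) : ℝ) : ℂ) * g ε q := by
      intro q
      have hnorm : ‖lam ε • q‖ = lam ε * ‖q‖ := by
        rw [norm_smul, Real.norm_eq_abs, abs_of_pos hL]
      have h1 : ‖lam ε • q‖ ^ r = lam ε ^ r * ‖q‖ ^ r := by
        rw [hnorm, Real.mul_rpow hL.le (norm_nonneg q)]
      have h3 : μ * ‖lam ε • q‖ ^ (2 * β) * t / ε ^ κ = μ * ‖q‖ ^ (2 * β) := by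
        rw [hnorm, Real.mul_rpow hL.le (norm_nonneg q), hL2β]
        field_simp
      have h4 : (inner ℝ (lam ε • q) x : ℝ) = lam ε * (inner ℝ q x : ℝ) :=
        real_inner_smul_left q x (lam ε)
      have h5 : a (lam ε • q) / ‖lam ε • q‖ ^ r = lam ε ^ (-r) * (a (lam ε • q) / ‖q‖ ^ r) := by
        rw [h1, Real.rpow_neg hL.le, mul_comm (lam ε ^ r), ← div_div, div_eq_inv_mul]
      rw [hF]
      show (((a (lam ε • q) / ‖lam ε • q‖ ^ r
            * Real.exp (-(μ * ‖lam ε • q‖ ^ (2 * β) * t / ε ^ κ)) : ℝ) : ℂ)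
          * Complex.exp (Complex.I * (((inner ℝ (lam ε • q) x : ℝ) / ε ^ α : ℝ) : ℂ)))
        = ((lam ε ^ (-r) : ℝ) : ℂ) * g ε q
      rw [h3, h4, h5, hg]
      push_cast
      ring
    have hcv := MeasureTheory.Measure.integral_comp_smul_of_nonneg
      (μ := (volume : Measure (EuclideanSpace ℝ (Fin d)))) F (lam ε) (hR := hL.le)
    rw [hdim] at hcv
    have hint : (∫ p, F p) = (lam ε ^ d : ℝ) • ∫ q, F (lam ε • q) := by
      rw [hcv, smul_smul, mul_inv_cancel₀ (pow_ne_zero d hL.ne'), one_smul]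
    have h6 : (∫ q, F (lam ε • q)) = ((lam ε ^ (-r) : ℝ) : ℂ) * ∫ q, g ε q := by
      rw [integral_congr_ae (Filter.Eventually.of_forall key), integral_const_mul]
    rw [hint, h6]
    have hc1 : ((d:ℝ)) + -r = 2 - 2 * γ := by rw [hr]; ring
    have hc2 : lam ε ^ d * lam ε ^ (-r) = lam ε ^ (2 - 2 * γ) := by
      rw [← Real.rpow_natCast (lam ε) d, ← Real.rpow_add hL, hc1]
    have hc3 : lam ε ^ (2 - 2 * γ) = ε ^ (κ * ((1 - γ) / β)) / t ^ ((1 - γ) / β) := by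
      rw [hlam]
      show ((ε ^ κ / t) ^ (1 / (2 * β))) ^ (2 - 2 * γ) = _
      rw [← Real.rpow_mul (div_pos hεκ ht).le,
        show (1 / (2 * β)) * (2 - 2 * γ) = (1 - γ) / β by field_simp,
        Real.div_rpow hεκ.le ht.le, ← Real.rpow_mul hε0.le]
    have hc4 : ε ^ (2 - 2 * κ) * ε ^ (κ * ((1 - γ) / β)) = 1 := by
      rw [← Real.rpow_add hε0,
        show 2 - 2 * κ + κ * ((1 - γ) / β) = 0 by rw [hκ]; field_simp; ring,
        Real.rpow_zero]
    have hcoef : ε ^ (2 - 2 * κ) * (lam ε ^ d * lam ε ^ (-r)) = t ^ (-(1 - γ) / β) := by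
      rw [hc2, hc3, show ε ^ (2 - 2 * κ) * (ε ^ (κ * ((1 - γ) / β)) / t ^ ((1 - γ) / β))
          = (ε ^ (2 - 2 * κ) * ε ^ (κ * ((1 - γ) / β))) / t ^ ((1 - γ) / β) by ring, hc4,
        show -(1 - γ) / β = -((1 - γ) / β) by ring, Real.rpow_neg ht.le, one_div]
    calc ((ε ^ (2 - 2 * κ) : ℝ) : ℂ) * ((lam ε ^ d : ℝ) •
          (((lam ε ^ (-r) : ℝ) : ℂ) * ∫ q, g ε q))
        = ((ε ^ (2 - 2 * κ) * (lam ε ^ d * lam ε ^ (-r)) : ℝ) : ℂ) * ∫ q, g ε q := by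
          rw [Complex.real_smul]; push_cast; ring
      _ = ((t ^ (-(1 - γ) / β) : ℝ) : ℂ) * ∫ q, g ε q := by rw [hcoef]
  -- Step B : dominated convergence
  have stepB : Filter.Tendsto (fun ε => ∫ q, g ε q) l (nhds (∫ q, f q)) := by
    obtain ⟨C, hC⟩ := haB
    have hC0 : 0 ≤ C := le_trans (ha0 0) (hC 0)
    set bound : EuclideanSpace ℝ (Fin d) → ℝ := fun q =>
      C / ‖q‖ ^ r * Real.exp (-(μ * ‖q‖ ^ (2 * β))) with hbound
    have hlamt : Filter.Tendsto lam l (nhds 0) := by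
      have h1 : Filter.Tendsto (fun ε : ℝ => ε ^ κ) l (nhds 0) := by
        have h0 := (Real.continuousAt_rpow_const 0 κ (Or.inr hκ0.le)).tendsto
        rw [Real.zero_rpow hκ0.ne'] at h0
        exact h0.mono_left nhdsWithin_le_nhds
      have h2 : Filter.Tendsto (fun y : ℝ => (y / t) ^ (1 / (2 * β))) (nhds 0) (nhds 0) := by
        have h3 := (Real.continuousAt_rpow_const 0 (1 / (2 * β)) (Or.inr (by positivity))).tendsto
        rw [Real.zero_rpow (by positivity : (1 / (2 * β) : ℝ) ≠ 0)] at h3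
        have h4 : Filter.Tendsto (fun y : ℝ => y / t) (nhds (0:ℝ)) (nhds 0) := by
          simpa using (continuous_id.div_const t).tendsto (0:ℝ)
        exact h3.comp h4
      exact h2.comp h1
    have hratio : Filter.Tendsto (fun ε : ℝ => lam ε / ε ^ α) l (nhds 0) := by
      have hexp : 0 < κ / (2 * β) - α := by
        have hcr : κ / (2 * β) = αc := by rw [hκ, hαc]; field_simp
        rw [hcr]; linarith
      have h1 : Filter.Tendsto (fun ε : ℝ => t ^ (-(1 / (2 * β))) * ε ^ (κ / (2 * β) - α)) l
          (nhds 0) := by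
        have h0 := (Real.continuousAt_rpow_const 0 (κ / (2 * β) - α) (Or.inr hexp.le)).tendsto
        rw [Real.zero_rpow hexp.ne'] at h0
        have h5 : Filter.Tendsto (fun ε : ℝ => t ^ (-(1 / (2 * β))) * ε ^ (κ / (2 * β) - α)) l
            (nhds (t ^ (-(1 / (2 * β))) * 0)) :=
          (h0.mono_left nhdsWithin_le_nhds).const_mul _
        simpa using h5
      refine h1.congr' ?_
      filter_upwards [eventually_mem_nhdsWithin] with ε (hε : (0:ℝ) < ε)
      show t ^ (-(1 / (2 * β))) * ε ^ (κ / (2 * β) - α) = lam ε / ε ^ α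
      rw [hlam]
      show t ^ (-(1 / (2 * β))) * ε ^ (κ / (2 * β) - α) = (ε ^ κ / t) ^ (1 / (2 * β)) / ε ^ α
      rw [Real.rpow_sub hε, Real.rpow_neg ht.le,
        Real.div_rpow (Real.rpow_nonneg hε.le κ) ht.le, ← Real.rpow_mul hε.le,
        show κ * (1 / (2 * β)) = κ / (2 * β) by ring]
      ring
    have hpt : ∀ q, Filter.Tendsto (fun ε => g ε q) l (nhds (f q)) := by
      intro q
      have ha' : Filter.Tendsto (fun ε => a (lam ε • q)) l (nhds (a 0)) := by
        have hsm : Filter.Tendsto (fun ε => lam ε • q) l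
            (nhds (0 : EuclideanSpace ℝ (Fin d))) := by
          have h6 := hlamt.smul_const q
          simpa using h6
        exact haCont.tendsto.comp hsm
      have h1 : Filter.Tendsto
          (fun ε => ((a (lam ε • q) / ‖q‖ ^ r * Real.exp (-(μ * ‖q‖ ^ (2 * β))) : ℝ) : ℂ)) l
          (nhds (((a 0 / ‖q‖ ^ r * Real.exp (-(μ * ‖q‖ ^ (2 * β))) : ℝ) : ℂ))) :=
        (Complex.continuous_ofReal.tendsto _).comp ((ha'.div_const _).mul_const _)
      have h2 : Filter.Tendsto
          (fun ε => Complex.exp (Complex.I * ((lam ε * (inner ℝ q x : ℝ) / ε ^ α : ℝ) : ℂ))) l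
          (nhds 1) := by
        have harg : Filter.Tendsto (fun ε => lam ε * (inner ℝ q x : ℝ) / ε ^ α) l (nhds 0) := by
          have h7 := hratio.mul_const ((inner ℝ q x : ℝ))
          rw [zero_mul] at h7
          refine h7.congr (fun ε => ?_)
          ring
        have h8 : Filter.Tendsto
            (fun ε => Complex.I * ((lam ε * (inner ℝ q x : ℝ) / ε ^ α : ℝ) : ℂ)) l (nhds 0) := by
          have hc := (Complex.continuous_ofReal.tendsto 0).comp harg
          have h9 := hc.const_mul Complex.I
          simpa using h9
        have h10 := (Complex.continuous_exp.tendsto 0).comp h8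
        simpa [Function.comp_def] using h10
      have h11 := h1.mul h2
      rw [mul_one] at h11
      exact h11
    have hmeas : ∀ ε : ℝ, AEStronglyMeasurable (g ε) volume := by
      intro ε
      refine Measurable.aestronglyMeasurable ?_
      apply Measurable.mul
      · exact Complex.continuous_ofReal.measurable.comp
          (((haM.comp (measurable_const_smul (lam ε))).div (aux_meas_norm_rpow d r)).mul
            (Real.measurable_exp.comp ((aux_meas_norm_rpow d (2 * β)).const_mul μ).neg))
      · refine Complex.continuous_exp.measurable.comp ?_
        refine Measurable.const_mul ?_ Complex.I
        refine Complex.continuous_ofReal.measurable.comp ?_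
        have hin : Continuous fun q : EuclideanSpace ℝ (Fin d) => (inner ℝ q x : ℝ) :=
          continuous_id.inner continuous_const
        exact (hin.measurable.const_mul (lam ε)).div_const _
    have hbdd : ∀ ε ∈ Set.Ioi (0:ℝ), ∀ᵐ q : EuclideanSpace ℝ (Fin d), ‖g ε q‖ ≤ bound q := by
      intro ε hε
      refine Filter.Eventually.of_forall (fun q => ?_)
      rw [hg]
      rw [norm_mul, mul_comm Complex.I, Complex.norm_exp_ofReal_mul_I, mul_one,
        Complex.norm_real, Real.norm_eq_abs,
        abs_of_nonneg (mul_nonneg (div_nonneg (ha0 _) (Real.rpow_nonneg (norm_nonneg q) r))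
          (Real.exp_pos _).le)]
      refine mul_le_mul_of_nonneg_right ?_ (Real.exp_pos _).le
      rcases eq_or_lt_of_le (Real.rpow_nonneg (norm_nonneg q) r) with h0 | h0
      · rw [← h0, div_zero, div_zero]
      · exact (div_le_div_iff_of_pos_right h0).mpr (hC _)
    have hbint : Integrable bound := by
      refine aux_polar_integrable d hd (h := fun y : ℝ => C / y ^ r * Real.exp (-(μ * y ^ (2 * β)))) ?_
      have base : IntegrableOn (fun y : ℝ => C * (y ^ (1 - 2 * γ) * Real.exp (-(μ * y ^ (2 * β)))))
          (Set.Ioi 0) :=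
        (aux_intOn hβ2 (show (-1:ℝ) < 1 - 2 * γ by linarith) hμ).const_mul C
      refine base.congr_fun (fun y hy => ?_) measurableSet_Ioi
      have hy0 : (0:ℝ) < y := hy
      have h1 : (y:ℝ) ^ (d - 1 : ℕ) = y ^ ((d:ℝ) - 1) := by
        rw [← Real.rpow_natCast y (d - 1), Nat.cast_sub hd, Nat.cast_one]
      have h2 : y ^ ((d:ℝ) - 1) / y ^ r = y ^ (1 - 2 * γ) := by
        rw [← Real.rpow_sub hy0]; congr 1; rw [hr]; ring
      rw [h1, show y ^ ((d:ℝ) - 1) * (C / y ^ r * Real.exp (-(μ * y ^ (2 * β))))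
          = C * ((y ^ ((d:ℝ) - 1) / y ^ r) * Real.exp (-(μ * y ^ (2 * β)))) by ring, h2]
    exact tendsto_integral_filter_of_dominated_convergence bound
      (Filter.Eventually.of_forall hmeas)
      (by filter_upwards [eventually_mem_nhdsWithin] with ε hε using hbdd ε hε)
      hbint (Filter.Eventually.of_forall hpt)
  -- Step C : value of the limit integral
  have stepC : (∫ q, f q) = ((a 0 * K₁ : ℝ) : ℂ) := by
    simp only [hf]
    rw [show ∫ q : EuclideanSpace ℝ (Fin d), ((a 0 / ‖q‖ ^ r * Real.exp (-(μ * ‖q‖ ^ (2 * β))) : ℝ) : ℂ)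
      = ((∫ q : EuclideanSpace ℝ (Fin d), (a 0 / ‖q‖ ^ r * Real.exp (-(μ * ‖q‖ ^ (2 * β)))) : ℝ) : ℂ)
      from integral_ofReal]
    congr 1
    have hpolar := MeasureTheory.integral_fun_norm_addHaar
      (μ := (volume : Measure (EuclideanSpace ℝ (Fin d))))
      (fun y : ℝ => a 0 / y ^ r * Real.exp (-(μ * y ^ (2 * β))))
    rw [hdim] at hpolar
    rw [hpolar]
    have hinner : ∫ y in Set.Ioi (0:ℝ),
        y ^ (d - 1) • (a 0 / y ^ r * Real.exp (-(μ * y ^ (2 * β))))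
        = ∫ y in Set.Ioi (0:ℝ),
          a 0 * (Real.exp (-(μ * y ^ (2 * β))) * y ^ (1 - 2 * γ)) := by
      refine setIntegral_congr_fun measurableSet_Ioi (fun y hy => ?_)
      have hy0 : (0:ℝ) < y := hy
      have h1 : (y:ℝ) ^ (d - 1 : ℕ) = y ^ ((d:ℝ) - 1) := by
        rw [← Real.rpow_natCast y (d - 1), Nat.cast_sub hd, Nat.cast_one]
      have h2 : y ^ ((d:ℝ) - 1) / y ^ r = y ^ (1 - 2 * γ) := by
        rw [← Real.rpow_sub hy0]; congr 1; rw [hr]; ring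
      rw [smul_eq_mul, h1, show y ^ ((d:ℝ) - 1) * (a 0 / y ^ r * Real.exp (-(μ * y ^ (2 * β))))
          = a 0 * (Real.exp (-(μ * y ^ (2 * β))) * (y ^ ((d:ℝ) - 1) / y ^ r)) by ring, h2]
    rw [hinner, integral_const_mul, hK₁, unitSphereArea, nsmul_eq_mul,
      smul_eq_mul]
    rw [measureReal_def]
    ring
  have final := (stepB.const_mul (((t ^ (-(1 - γ) / β) : ℝ) : ℂ))).congr'
    (by filter_upwards [eventually_mem_nhdsWithin] with ε hε using (stepA ε hε).symm)
  rw [stepC] at final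
  convert final using 2
  push_cast
  ring
end

section
/- Let d ≥ 1 be an integer, μ > 0, 0 < β < 1, 0 < γ < 1 with β + γ > 1, κ = 2β/(2β+γ−1), and let a : ℝ^d → [0,∞) be bounded and measurable. Then for every ε ∈ (0,1] and t > 0, the change of variables w ↦ ε^{κ/(2β)} |s−u|^{−1/(2β)} w gives the identity ε^{2−2κ} ∫_{[0,t]²} ∫_{ℝ^d} e^{−μ|w|^{2β} |s−u|/ε^κ} (a(w)/|w|^{2γ+d−2}) dw ds du = ∫_{[0,t]²} ∫_{ℝ^d} (e^{−μ|w|^{2β}}/|w|^{2γ+d−2}) a(ε^{κ/(2β)} w / |s−u|^{1/(2β)}) |s−u|^{−(1−γ)/β} dw ds du, and both sides are bounded above by (sup a) · K₁ · (κ²/(2−κ)) · t^{2/κ}, where K₁ = Ω_d ∫₀^∞ e^{−μ ρ^{2β}} ρ^{1−2γ} dρ and Ω_d is the surface area of the unit sphere in ℝ^d. In particular the bound is uniform in ε ∈ (0,1]. -/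
open MeasureTheory

section AuxLemmas
open Real Set Metric intervalIntegral

lemma aux_integrableOn_rpow_mul_exp_neg_mul_rpow {p q b : ℝ} (hp : 0 < p) (hq : -1 < q)
    (hb : 0 < b) :
    IntegrableOn (fun x : ℝ => x ^ q * Real.exp (-b * x ^ p)) (Set.Ioi 0) := by
  rw [← integrableOn_Ioi_comp_rpow_iff' _ (inv_ne_zero hp.ne')]
  have h : IntegrableOn (fun x : ℝ => x ^ ((q + 1) / p - 1) * Real.exp (-b * x ^ (1:ℝ)))
      (Ioi 0) := by
    refine integrableOn_rpow_mul_exp_neg_mul_rpow ?_ zero_lt_one hb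
    have : 0 < (q + 1) / p := div_pos (by linarith) hp
    linarith
  refine h.congr_fun (fun x hx => ?_) measurableSet_Ioi
  have hx0 : (0:ℝ) < x := hx
  beta_reduce
  rw [Real.rpow_one, smul_eq_mul]
  rw [← Real.rpow_mul hx0.le, ← Real.rpow_mul hx0.le, inv_mul_cancel₀ hp.ne', Real.rpow_one]
  rw [← mul_assoc, ← Real.rpow_add hx0]
  congr 2
  field_simp
  ring

lemma aux_integrable_fun_norm_addHaar {E : Type*} [NormedAddCommGroup E] [NormedSpace ℝ E]
    [MeasurableSpace E] [BorelSpace E] [FiniteDimensional ℝ E] [Nontrivial E]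
    (μ : Measure E) [μ.IsAddHaarMeasure] {f : ℝ → ℝ}
    (hf : IntegrableOn (fun y => y ^ (Module.finrank ℝ E - 1) * f y) (Set.Ioi 0)) :
    Integrable (fun x => f ‖x‖) μ := by
  have h0 : μ.restrict ({(0:E)}ᶜ) = μ := by
    rw [Measure.restrict_congr_set (t := univ) (ae_eq_univ.2 (by simp)), Measure.restrict_univ]
  rw [← h0]
  rw [← map_comap_subtype_coe (measurableSet_singleton (0:E)).compl,
    (MeasurableEmbedding.subtype_coe (measurableSet_singleton (0:E)).compl).integrable_map_iff]
  have hcomp := (μ.measurePreserving_homeomorphUnitSphereProd).integrable_comp_emb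
    (Homeomorph.measurableEmbedding _)
    (g := (fun y => f y) ∘ Subtype.val ∘ Prod.snd)
  rw [show ((fun x : E => f ‖x‖) ∘ (Subtype.val : ({(0:E)}ᶜ : Set E) → E))
      = ((fun y => f y) ∘ Subtype.val ∘ Prod.snd) ∘ (homeomorphUnitSphereProd E) from by
        funext x; simp only [Function.comp_apply, homeomorphUnitSphereProd_apply_snd_coe]]
  rw [hcomp]
  -- now integrability on the product
  have hsnd : Integrable ((fun y => f y) ∘ Subtype.val)
      (Measure.volumeIoiPow (Module.finrank ℝ E - 1)) := by
    rw [Measure.volumeIoiPow, integrable_withDensity_iff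
      ((measurable_subtype_coe.pow_const _).ennreal_ofReal)
      (Filter.Eventually.of_forall fun x => ENNReal.ofReal_lt_top)]
    have h2 : Integrable ((fun y : ℝ => y ^ (Module.finrank ℝ E - 1) * f y) ∘ (Subtype.val : Set.Ioi (0:ℝ) → ℝ))
        (Measure.comap Subtype.val volume) := by
      rw [← (MeasurableEmbedding.subtype_coe measurableSet_Ioi).integrable_map_iff,
        map_comap_subtype_coe measurableSet_Ioi]
      exact hf
    refine h2.congr (Filter.Eventually.of_forall fun r => ?_)
    show r.1 ^ (Module.finrank ℝ E - 1) * f r.1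
      = f r.1 * (ENNReal.ofReal (r.1 ^ (Module.finrank ℝ E - 1))).toReal
    rw [ENNReal.toReal_ofReal (pow_nonneg r.2.out.le _)]
    ring
  have := (integrable_const (1:ℝ) (μ := μ.toSphere)).smul_prod hsnd
  simpa [Function.comp_def] using this

lemma aux_nontrivial (d : ℕ) (hd : 1 ≤ d) : Nontrivial (EuclideanSpace ℝ (Fin d)) := by
  have h : 0 < Module.finrank ℝ (EuclideanSpace ℝ (Fin d)) := by
    rw [finrank_euclideanSpace_fin]; omega
  exact Module.nontrivial_of_finrank_pos h

lemma aux_oneD_s9 (d : ℕ) (hd : 1 ≤ d) {μ β γ : ℝ} (hμ : 0 < μ) (hβ0 : 0 < β) (hγ1 : γ < 1) :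
    ∀ x ∈ Set.Ioi (0:ℝ), Real.exp (-(μ * x ^ (2*β))) * x ^ (1 - 2*γ)
      = x ^ (Module.finrank ℝ (EuclideanSpace ℝ (Fin d)) - 1)
        • (Real.exp (-(μ * x ^ (2*β))) / x ^ (2*γ + (d:ℝ) - 2)) := by
  intro x hx
  have hx0 : (0:ℝ) < x := hx
  rw [smul_eq_mul, finrank_euclideanSpace_fin, ← Real.rpow_natCast x (d-1),
    Nat.cast_sub hd, Nat.cast_one, mul_comm (x ^ ((d:ℝ)-1)) _, div_mul_eq_mul_div, mul_div_assoc,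
    ← Real.rpow_sub hx0, show ((d:ℝ) - 1 - (2*γ + (d:ℝ) - 2)) = 1 - 2*γ by ring]

lemma aux_f0 (d : ℕ) (hd : 1 ≤ d) {μ β γ : ℝ} (hμ : 0 < μ) (hβ0 : 0 < β) (hγ0 : 0 < γ)
    (hγ1 : γ < 1) :
    Integrable (fun w : EuclideanSpace ℝ (Fin d) =>
        Real.exp (-(μ * ‖w‖ ^ (2*β))) / ‖w‖ ^ (2*γ + (d:ℝ) - 2)) ∧
    (∫ w : EuclideanSpace ℝ (Fin d),
        Real.exp (-(μ * ‖w‖ ^ (2*β))) / ‖w‖ ^ (2*γ + (d:ℝ) - 2))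
      = unitSphereArea d *
        ∫ ρ in Set.Ioi (0:ℝ), Real.exp (-(μ * ρ ^ (2*β))) * ρ ^ (1 - 2*γ) := by
  haveI := aux_nontrivial d hd
  have h1d : IntegrableOn
      (fun y : ℝ => y ^ (Module.finrank ℝ (EuclideanSpace ℝ (Fin d)) - 1)
        * (Real.exp (-(μ * y ^ (2*β))) / y ^ (2*γ + (d:ℝ) - 2))) (Set.Ioi 0) := by
    have base : IntegrableOn (fun x : ℝ => x ^ (1-2*γ) * Real.exp (-μ * x ^ (2*β)))
        (Set.Ioi 0) :=
      aux_integrableOn_rpow_mul_exp_neg_mul_rpow (by linarith) (by linarith) hμ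
    refine base.congr_fun (fun x hx => ?_) measurableSet_Ioi
    have h := aux_oneD_s9 d hd hμ hβ0 hγ1 x hx
    rw [smul_eq_mul] at h
    show x ^ (1-2*γ) * Real.exp (-μ * x ^ (2*β))
      = x ^ (Module.finrank ℝ (EuclideanSpace ℝ (Fin d)) - 1)
        * (Real.exp (-(μ * x ^ (2*β))) / x ^ (2*γ + (d:ℝ) - 2))
    rw [neg_mul, ← h]; ring
  constructor
  · exact aux_integrable_fun_norm_addHaar volume h1d
  · rw [integral_fun_norm_addHaar (volume : Measure (EuclideanSpace ℝ (Fin d)))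
      (fun y => Real.exp (-(μ * y ^ (2*β))) / y ^ (2*γ + (d:ℝ) - 2))]
    rw [← setIntegral_congr_fun measurableSet_Ioi
      (fun x hx => (aux_oneD_s9 d hd hμ hβ0 hγ1 x hx))]
    rw [unitSphereArea, finrank_euclideanSpace_fin, nsmul_eq_mul, smul_eq_mul]
    rw [measureReal_def]
    ring

lemma aux_cov (d : ℕ) (hd : 1 ≤ d) {μ β γ κ ε : ℝ} (hβ0 : 0 < β) (hγ1 : γ < 1) (hβγ : 1 < β + γ)
    (hκ : κ = 2 * β / (2 * β + γ - 1)) (hε0 : 0 < ε)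
    (a : EuclideanSpace ℝ (Fin d) → ℝ) {r : ℝ} (hr : 0 < r) :
    ε ^ (2 - 2 * κ) * ∫ w : EuclideanSpace ℝ (Fin d),
        Real.exp (-(μ * ‖w‖ ^ (2 * β) * r / ε ^ κ)) * a w / ‖w‖ ^ (2 * γ + (d:ℝ) - 2)
      = ∫ w : EuclideanSpace ℝ (Fin d),
        Real.exp (-(μ * ‖w‖ ^ (2 * β))) / ‖w‖ ^ (2 * γ + (d:ℝ) - 2)
          * a ((ε ^ (κ / (2 * β)) / r ^ (1 / (2 * β))) • w) * r ^ (-(1 - γ) / β) := by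
  haveI := aux_nontrivial d hd
  have h2β : (0:ℝ) < 2 * β := by linarith
  have hden : (0:ℝ) < 2 * β + γ - 1 := by linarith
  set c : ℝ := ε ^ (κ / (2 * β)) / r ^ (1 / (2 * β)) with hc_def
  have hc : 0 < c := div_pos (Real.rpow_pos_of_pos hε0 _) (Real.rpow_pos_of_pos hr _)
  have hεκ : (0:ℝ) < ε ^ κ := Real.rpow_pos_of_pos hε0 _
  have hc2β : c ^ (2 * β) = ε ^ κ / r := by
    rw [hc_def, Real.div_rpow (Real.rpow_nonneg hε0.le _) (Real.rpow_nonneg hr.le _),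
      ← Real.rpow_mul hε0.le, ← Real.rpow_mul hr.le,
      div_mul_cancel₀ _ h2β.ne', one_div, inv_mul_cancel₀ h2β.ne', Real.rpow_one]
  have key := Measure.integral_comp_smul_of_nonneg (volume : Measure (EuclideanSpace ℝ (Fin d)))
    (fun w => Real.exp (-(μ * ‖w‖ ^ (2 * β) * r / ε ^ κ)) * a w / ‖w‖ ^ (2 * γ + (d:ℝ) - 2)) c
    (hR := hc.le)
  rw [finrank_euclideanSpace_fin, smul_eq_mul] at key
  have hcd : (0:ℝ) < c ^ d := pow_pos hc d
  have hIeq : (∫ w : EuclideanSpace ℝ (Fin d),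
      Real.exp (-(μ * ‖w‖ ^ (2 * β) * r / ε ^ κ)) * a w / ‖w‖ ^ (2 * γ + (d:ℝ) - 2))
      = c ^ d * ∫ w : EuclideanSpace ℝ (Fin d),
        Real.exp (-(μ * ‖(c • w)‖ ^ (2 * β) * r / ε ^ κ)) * a (c • w)
          / ‖(c • w)‖ ^ (2 * γ + (d:ℝ) - 2) := by
    rw [key, ← mul_assoc, mul_inv_cancel₀ hcd.ne', one_mul]
  rw [hIeq]
  -- rewrite the substituted integrand a.e.
  have hae : ∀ᵐ w : EuclideanSpace ℝ (Fin d) ∂volume, w ≠ 0 := by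
    simpa [ae_iff] using measure_singleton (0 : EuclideanSpace ℝ (Fin d))
  have hcongr : (∫ w : EuclideanSpace ℝ (Fin d),
      Real.exp (-(μ * ‖(c • w)‖ ^ (2 * β) * r / ε ^ κ)) * a (c • w)
        / ‖(c • w)‖ ^ (2 * γ + (d:ℝ) - 2))
      = ∫ w : EuclideanSpace ℝ (Fin d), (c ^ (2 * γ + (d:ℝ) - 2))⁻¹ *
        (Real.exp (-(μ * ‖w‖ ^ (2 * β))) / ‖w‖ ^ (2 * γ + (d:ℝ) - 2) * a (c • w)) := by
    refine integral_congr_ae (hae.mono fun w hw => ?_)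
    beta_reduce
    have hnw : (0:ℝ) < ‖w‖ := norm_pos_iff.2 hw
    have hnorm : ‖c • w‖ = c * ‖w‖ := by
      rw [norm_smul, Real.norm_eq_abs, abs_of_pos hc]
    rw [hnorm, Real.mul_rpow hc.le (norm_nonneg w), Real.mul_rpow hc.le (norm_nonneg w), hc2β]
    rw [show μ * (ε ^ κ / r * ‖w‖ ^ (2 * β)) * r / ε ^ κ = μ * ‖w‖ ^ (2 * β) by
      field_simp]
    have hce : (0:ℝ) < c ^ (2 * γ + (d:ℝ) - 2) := Real.rpow_pos_of_pos hc _
    field_simp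
    try ring
  rw [hcongr, MeasureTheory.integral_const_mul]
  set IG : ℝ := ∫ w : EuclideanSpace ℝ (Fin d),
    Real.exp (-(μ * ‖w‖ ^ (2 * β))) / ‖w‖ ^ (2 * γ + (d:ℝ) - 2) * a (c • w) with hIG
  have hrhs : (∫ w : EuclideanSpace ℝ (Fin d),
      Real.exp (-(μ * ‖w‖ ^ (2 * β))) / ‖w‖ ^ (2 * γ + (d:ℝ) - 2) * a (c • w)
        * r ^ (-(1 - γ) / β)) = IG * r ^ (-(1 - γ) / β) := integral_mul_const _ _
  rw [hrhs]
  rw [show ε ^ (2 - 2*κ) * (c ^ d * ((c ^ (2 * γ + (d:ℝ) - 2))⁻¹ * IG))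
      = (ε ^ (2 - 2*κ) * c ^ d * (c ^ (2 * γ + (d:ℝ) - 2))⁻¹) * IG by ring,
    mul_comm _ IG]
  congr 1
  -- ε ^ (2 - 2κ) * c ^ d * (c ^ e)⁻¹ = r ^ (-(1-γ)/β)
  have hcd' : (c:ℝ) ^ d = c ^ ((d:ℕ):ℝ) := (Real.rpow_natCast c d).symm
  rw [hcd', ← Real.rpow_neg hc.le, mul_assoc, ← Real.rpow_add hc,
    show ((d:ℕ):ℝ) + -(2 * γ + (d:ℝ) - 2) = 2 - 2*γ by push_cast; ring]
  rw [hc_def, Real.div_rpow (Real.rpow_nonneg hε0.le _) (Real.rpow_nonneg hr.le _),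
    ← Real.rpow_mul hε0.le, ← Real.rpow_mul hr.le, div_eq_mul_inv, ← Real.rpow_neg hr.le,
    ← mul_assoc, ← Real.rpow_add hε0]
  rw [show 2 - 2*κ + κ / (2*β) * (2 - 2*γ) = 0 by
      rw [hκ]; field_simp; try ring]
  rw [Real.rpow_zero, one_mul]
  congr 1
  field_simp

lemma aux_abs_rpow {α s t : ℝ} (hα0 : 0 < α) (hα1 : α < 1) (h0s : 0 ≤ s) (hst : s ≤ t) :
    IntervalIntegrable (fun u => |s - u| ^ (-α)) volume 0 t ∧
    ∫ u in (0:ℝ)..t, |s - u| ^ (-α) = (s ^ (1-α) + (t-s) ^ (1-α)) / (1-α) := by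
  have hr : (-1:ℝ) < -α := by linarith
  have hα1' : (0:ℝ) < 1 - α := by linarith
  have e1 : Set.EqOn (fun u : ℝ => (s - u) ^ (-α)) (fun u => |s - u| ^ (-α))
      (Set.uIcc 0 s) := by
    intro u hu
    rw [Set.uIcc_of_le h0s] at hu
    show (s - u) ^ (-α) = |s - u| ^ (-α)
    rw [abs_of_nonneg (by linarith [hu.2])]
  have e2 : Set.EqOn (fun u : ℝ => (u - s) ^ (-α)) (fun u => |s - u| ^ (-α))
      (Set.uIcc s t) := by
    intro u hu
    rw [Set.uIcc_of_le hst] at hu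
    show (u - s) ^ (-α) = |s - u| ^ (-α)
    rw [abs_sub_comm, abs_of_nonneg (by linarith [hu.1])]
  have i1' : IntervalIntegrable (fun u : ℝ => (s - u) ^ (-α)) volume 0 s := by
    have := (intervalIntegral.intervalIntegrable_rpow' (a := 0) (b := s) hr).comp_sub_left s
    simpa using this.symm
  have i2' : IntervalIntegrable (fun u : ℝ => (u - s) ^ (-α)) volume s t := by
    have := (intervalIntegral.intervalIntegrable_rpow' (a := 0) (b := t - s) hr).comp_sub_right s
    simpa using this
  have i1 : IntervalIntegrable (fun u : ℝ => |s - u| ^ (-α)) volume 0 s := by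
    rw [intervalIntegrable_iff] at i1' ⊢
    exact i1'.congr_fun (e1.mono Set.uIoc_subset_uIcc) measurableSet_uIoc
  have i2 : IntervalIntegrable (fun u : ℝ => |s - u| ^ (-α)) volume s t := by
    rw [intervalIntegrable_iff] at i2' ⊢
    exact i2'.congr_fun (e2.mono Set.uIoc_subset_uIcc) measurableSet_uIoc
  refine ⟨i1.trans i2, ?_⟩
  rw [← intervalIntegral.integral_add_adjacent_intervals i1 i2]
  have v1 : ∫ u in (0:ℝ)..s, |s - u| ^ (-α) = s ^ (1-α) / (1-α) := by
    rw [← intervalIntegral.integral_congr e1,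
      intervalIntegral.integral_comp_sub_left (fun x : ℝ => x ^ (-α)) s, sub_self, sub_zero,
      integral_rpow (Or.inl hr), Real.zero_rpow (by linarith : -α + 1 ≠ 0)]
    rw [show -α + 1 = 1 - α by ring]
    ring
  have v2 : ∫ u in s..t, |s - u| ^ (-α) = (t - s) ^ (1-α) / (1-α) := by
    rw [← intervalIntegral.integral_congr e2,
      intervalIntegral.integral_comp_sub_right (fun x : ℝ => x ^ (-α)) s, sub_self,
      integral_rpow (Or.inl hr), Real.zero_rpow (by linarith : -α + 1 ≠ 0)]
    rw [show -α + 1 = 1 - α by ring]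
    ring
  rw [v1, v2]
  ring

end AuxLemmas

/-- The key rescaling identity and uniform-in-`ε` bound behind the moment estimate
(Lemma 2.1): the change of variables `w ↦ ε^{κ/2β}|s-u|^{-1/2β} w` transforms
`ε^{2-2κ} ∫_{[0,t]²}∫_{ℝ^d} e^{-μ|w|^{2β}|s-u|/ε^κ} a(w)/|w|^{2γ+d-2}` into an
expression bounded by `(sup a)·K₁·(κ²/(2-κ))·t^{2/κ}`, uniformly in `ε ∈ (0,1]`. -/
theorem stmt_9 (d : ℕ) (hd : 1 ≤ d) (μ β γ κ : ℝ) (hμ : 0 < μ) (hβ0 : 0 < β)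
    (hβ1 : β < 1) (hγ0 : 0 < γ) (hγ1 : γ < 1) (hβγ : 1 < β + γ)
    (hκ : κ = 2 * β / (2 * β + γ - 1))
    (a : EuclideanSpace ℝ (Fin d) → ℝ) (ha0 : ∀ p, 0 ≤ a p)
    (haB : ∃ C, ∀ p, a p ≤ C) (haM : Measurable a)
    (K₁ : ℝ) (hK₁ : K₁ = unitSphereArea d *
      ∫ ρ in Set.Ioi (0 : ℝ), Real.exp (-(μ * ρ ^ (2 * β))) * ρ ^ (1 - 2 * γ))
    (ε t : ℝ) (hε : ε ∈ Set.Ioc (0 : ℝ) 1) (ht : 0 < t) :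
    (ε ^ (2 - 2 * κ) *
        ∫ s in (0 : ℝ)..t, ∫ u in (0 : ℝ)..t, ∫ w : EuclideanSpace ℝ (Fin d),
          Real.exp (-(μ * ‖w‖ ^ (2 * β) * |s - u| / ε ^ κ)) * a w / ‖w‖ ^ (2 * γ + d - 2)
      = ∫ s in (0 : ℝ)..t, ∫ u in (0 : ℝ)..t, ∫ w : EuclideanSpace ℝ (Fin d),
          Real.exp (-(μ * ‖w‖ ^ (2 * β))) / ‖w‖ ^ (2 * γ + d - 2)
            * a ((ε ^ (κ / (2 * β)) / |s - u| ^ (1 / (2 * β))) • w)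
            * |s - u| ^ (-(1 - γ) / β)) ∧
    ε ^ (2 - 2 * κ) *
        (∫ s in (0 : ℝ)..t, ∫ u in (0 : ℝ)..t, ∫ w : EuclideanSpace ℝ (Fin d),
          Real.exp (-(μ * ‖w‖ ^ (2 * β) * |s - u| / ε ^ κ)) * a w / ‖w‖ ^ (2 * γ + d - 2))
      ≤ (⨆ p, a p) * K₁ * (κ ^ 2 / (2 - κ)) * t ^ (2 / κ) ∧
    (∫ s in (0 : ℝ)..t, ∫ u in (0 : ℝ)..t, ∫ w : EuclideanSpace ℝ (Fin d),
          Real.exp (-(μ * ‖w‖ ^ (2 * β))) / ‖w‖ ^ (2 * γ + d - 2)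
            * a ((ε ^ (κ / (2 * β)) / |s - u| ^ (1 / (2 * β))) • w)
            * |s - u| ^ (-(1 - γ) / β))
      ≤ (⨆ p, a p) * K₁ * (κ ^ 2 / (2 - κ)) * t ^ (2 / κ) := by
  obtain ⟨hε0, hε1⟩ := hε
  have h2β : (0:ℝ) < 2 * β := by linarith
  have hden : (0:ℝ) < 2 * β + γ - 1 := by linarith
  set al : ℝ := (1 - γ) / β with hal_def
  have hal0 : 0 < al := div_pos (by linarith) hβ0
  have hal1 : al < 1 := (div_lt_one hβ0).2 (by linarith)
  have hκ0 : 0 < κ := hκ ▸ div_pos h2β hden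
  have hκ2 : κ < 2 := by rw [hκ, div_lt_iff₀ hden]; linarith
  -- sup of a
  have hBdd : BddAbove (Set.range a) := by
    obtain ⟨C, hC⟩ := haB
    exact ⟨C, by rintro x ⟨p, rfl⟩; exact hC p⟩
  set M : ℝ := ⨆ p, a p with hM_def
  have hM : ∀ p, a p ≤ M := fun p => le_ciSup hBdd p
  have hM0 : 0 ≤ M := le_trans (ha0 0) (hM 0)
  -- K₁ facts
  have hf0 := aux_f0 d hd hμ hβ0 hγ0 hγ1
  have hK₁' : K₁ = ∫ w : EuclideanSpace ℝ (Fin d),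
      Real.exp (-(μ * ‖w‖ ^ (2*β))) / ‖w‖ ^ (2*γ + (d:ℝ) - 2) := by
    rw [hK₁, ← hf0.2]
  have hf0nn : ∀ w : EuclideanSpace ℝ (Fin d),
      0 ≤ Real.exp (-(μ * ‖w‖ ^ (2*β))) / ‖w‖ ^ (2*γ + (d:ℝ) - 2) :=
    fun w => div_nonneg (Real.exp_nonneg _) (Real.rpow_nonneg (norm_nonneg _) _)
  -- bound on the rescaled w-integral, for any scaling factor c
  have hG : ∀ c : ℝ, (∫ w : EuclideanSpace ℝ (Fin d),
      Real.exp (-(μ * ‖w‖ ^ (2*β))) / ‖w‖ ^ (2*γ + (d:ℝ) - 2) * a (c • w)) ≤ M * K₁ := by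
    intro c
    have step : (∫ w : EuclideanSpace ℝ (Fin d),
        Real.exp (-(μ * ‖w‖ ^ (2*β))) / ‖w‖ ^ (2*γ + (d:ℝ) - 2) * a (c • w))
        ≤ ∫ w : EuclideanSpace ℝ (Fin d),
          Real.exp (-(μ * ‖w‖ ^ (2*β))) / ‖w‖ ^ (2*γ + (d:ℝ) - 2) * M :=
      integral_mono_of_nonneg
        (Filter.Eventually.of_forall fun w => mul_nonneg (hf0nn w) (ha0 _))
        (hf0.1.mul_const M)
        (Filter.Eventually.of_forall fun w =>
          mul_le_mul_of_nonneg_left (hM _) (hf0nn w))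
    calc (∫ w : EuclideanSpace ℝ (Fin d),
        Real.exp (-(μ * ‖w‖ ^ (2*β))) / ‖w‖ ^ (2*γ + (d:ℝ) - 2) * a (c • w))
        ≤ ∫ w : EuclideanSpace ℝ (Fin d),
          Real.exp (-(μ * ‖w‖ ^ (2*β))) / ‖w‖ ^ (2*γ + (d:ℝ) - 2) * M := step
      _ = (∫ w : EuclideanSpace ℝ (Fin d),
          Real.exp (-(μ * ‖w‖ ^ (2*β))) / ‖w‖ ^ (2*γ + (d:ℝ) - 2)) * M :=
        integral_mul_const _ _
      _ = M * K₁ := by rw [← hK₁']; ring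
  -- facts about J
  have hJ_nonneg : ∀ s u : ℝ, 0 ≤ ∫ w : EuclideanSpace ℝ (Fin d),
      Real.exp (-(μ * ‖w‖ ^ (2 * β))) / ‖w‖ ^ (2 * γ + (d:ℝ) - 2)
        * a ((ε ^ (κ / (2 * β)) / |s - u| ^ (1 / (2 * β))) • w)
        * |s - u| ^ (-(1 - γ) / β) := by
    intro s u
    refine integral_nonneg fun w => ?_
    exact mul_nonneg (mul_nonneg (hf0nn w) (ha0 _)) (Real.rpow_nonneg (abs_nonneg _) _)
  have hJ_le : ∀ s u : ℝ, (∫ w : EuclideanSpace ℝ (Fin d),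
      Real.exp (-(μ * ‖w‖ ^ (2 * β))) / ‖w‖ ^ (2 * γ + (d:ℝ) - 2)
        * a ((ε ^ (κ / (2 * β)) / |s - u| ^ (1 / (2 * β))) • w)
        * |s - u| ^ (-(1 - γ) / β))
      ≤ M * K₁ * |s - u| ^ (-al) := by
    intro s u
    rw [integral_mul_const]
    have h1 : |s - u| ^ (-(1 - γ) / β) = |s - u| ^ (-al) := by
      rw [hal_def, neg_div]
    rw [h1]
    exact mul_le_mul_of_nonneg_right (hG _) (Real.rpow_nonneg (abs_nonneg _) _)
  -- middle-level bound
  have hmid : ∀ s ∈ Set.Icc (0:ℝ) t,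
      (∫ u in (0:ℝ)..t, ∫ w : EuclideanSpace ℝ (Fin d),
        Real.exp (-(μ * ‖w‖ ^ (2 * β))) / ‖w‖ ^ (2 * γ + (d:ℝ) - 2)
          * a ((ε ^ (κ / (2 * β)) / |s - u| ^ (1 / (2 * β))) • w)
          * |s - u| ^ (-(1 - γ) / β))
      ≤ M * K₁ * ((s ^ (1-al) + (t-s) ^ (1-al)) / (1-al)) := by
    intro s hs
    obtain ⟨habs_int, habs_val⟩ := aux_abs_rpow hal0 hal1 hs.1 hs.2
    have dom_int : IntervalIntegrable (fun u => M * K₁ * |s - u| ^ (-al)) volume 0 t :=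
      habs_int.const_mul _
    have step : (∫ u in (0:ℝ)..t, ∫ w : EuclideanSpace ℝ (Fin d),
        Real.exp (-(μ * ‖w‖ ^ (2 * β))) / ‖w‖ ^ (2 * γ + (d:ℝ) - 2)
          * a ((ε ^ (κ / (2 * β)) / |s - u| ^ (1 / (2 * β))) • w)
          * |s - u| ^ (-(1 - γ) / β))
        ≤ ∫ u in (0:ℝ)..t, M * K₁ * |s - u| ^ (-al) := by
      rw [intervalIntegral.integral_of_le ht.le, intervalIntegral.integral_of_le ht.le]
      exact integral_mono_of_nonneg
        (Filter.Eventually.of_forall fun u => hJ_nonneg s u)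
        ((intervalIntegrable_iff_integrableOn_Ioc_of_le ht.le).1 dom_int)
        (Filter.Eventually.of_forall fun u => hJ_le s u)
    refine step.trans ?_
    rw [intervalIntegral.integral_const_mul, habs_val]
  -- outer level
  have h1al : (0:ℝ) < 1 - al := by linarith
  have h2al : (0:ℝ) < 2 - al := by linarith
  have iA : IntervalIntegrable (fun s : ℝ => s ^ (1-al)) volume 0 t :=
    intervalIntegral.intervalIntegrable_rpow' (by linarith)
  have iB : IntervalIntegrable (fun s : ℝ => (t - s) ^ (1-al)) volume 0 t := by
    have := (intervalIntegral.intervalIntegrable_rpow' (a := 0) (b := t)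
      (by linarith : (-1:ℝ) < 1-al)).comp_sub_left t
    simpa using this.symm
  have vA : ∫ s in (0:ℝ)..t, s ^ (1-al) = t ^ (2-al) / (2-al) := by
    rw [integral_rpow (Or.inl (by linarith : (-1:ℝ) < 1-al)),
      Real.zero_rpow (by linarith : 1-al+1 ≠ 0), show 1-al+1 = 2-al by ring]
    ring
  have vB : ∫ s in (0:ℝ)..t, (t - s) ^ (1-al) = t ^ (2-al) / (2-al) := by
    rw [intervalIntegral.integral_comp_sub_left (fun x : ℝ => x ^ (1-al)) t, sub_self,
      sub_zero, integral_rpow (Or.inl (by linarith : (-1:ℝ) < 1-al)),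
      Real.zero_rpow (by linarith : 1-al+1 ≠ 0), show 1-al+1 = 2-al by ring]
    ring
  have houter : (∫ s in (0:ℝ)..t, ∫ u in (0:ℝ)..t, ∫ w : EuclideanSpace ℝ (Fin d),
      Real.exp (-(μ * ‖w‖ ^ (2 * β))) / ‖w‖ ^ (2 * γ + (d:ℝ) - 2)
        * a ((ε ^ (κ / (2 * β)) / |s - u| ^ (1 / (2 * β))) • w)
        * |s - u| ^ (-(1 - γ) / β))
      ≤ M * K₁ * (κ ^ 2 / (2 - κ)) * t ^ (2 / κ) := by
    have step : (∫ s in (0:ℝ)..t, ∫ u in (0:ℝ)..t, ∫ w : EuclideanSpace ℝ (Fin d),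
        Real.exp (-(μ * ‖w‖ ^ (2 * β))) / ‖w‖ ^ (2 * γ + (d:ℝ) - 2)
          * a ((ε ^ (κ / (2 * β)) / |s - u| ^ (1 / (2 * β))) • w)
          * |s - u| ^ (-(1 - γ) / β))
        ≤ ∫ s in (0:ℝ)..t, M * K₁ * ((s ^ (1-al) + (t-s) ^ (1-al)) / (1-al)) := by
      rw [intervalIntegral.integral_of_le ht.le, intervalIntegral.integral_of_le ht.le]
      refine integral_mono_of_nonneg
        (Filter.Eventually.of_forall fun s =>
          intervalIntegral.integral_nonneg ht.le fun u _ => hJ_nonneg s u)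
        ((intervalIntegrable_iff_integrableOn_Ioc_of_le ht.le).1
          (((iA.add iB).div_const (1-al)).const_mul (M * K₁)))
        (((ae_restrict_mem measurableSet_Ioc).mono fun s hs =>
          hmid s (Set.Ioc_subset_Icc_self hs)))
    refine step.trans ?_
    rw [intervalIntegral.integral_const_mul, intervalIntegral.integral_div,
      intervalIntegral.integral_add iA iB, vA, vB]
    have h2κ0 : (0:ℝ) < 2 - κ := by linarith
    have hprodne : ((1-al) * (2-al)) ≠ 0 := by positivity
    have hcoef : κ ^ 2 / (2 - κ) = 2 / ((1-al) * (2-al)) := by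
      rw [div_eq_div_iff h2κ0.ne' hprodne, hal_def, hκ]
      field_simp
      ring
    have hexpeq : (2:ℝ) - al = 2 / κ := by
      rw [hal_def, hκ, div_div_eq_mul_div, eq_div_iff h2β.ne']
      field_simp
      ring
    rw [hcoef, ← hexpeq]
    apply le_of_eq
    field_simp [h1al.ne', h2al.ne']
    try ring
  -- equality of the two double integrals
  have hconj1 : ε ^ (2 - 2 * κ) *
      (∫ s in (0 : ℝ)..t, ∫ u in (0 : ℝ)..t, ∫ w : EuclideanSpace ℝ (Fin d),
        Real.exp (-(μ * ‖w‖ ^ (2 * β) * |s - u| / ε ^ κ)) * a w / ‖w‖ ^ (2 * γ + (d:ℝ) - 2))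
      = ∫ s in (0 : ℝ)..t, ∫ u in (0 : ℝ)..t, ∫ w : EuclideanSpace ℝ (Fin d),
        Real.exp (-(μ * ‖w‖ ^ (2 * β))) / ‖w‖ ^ (2 * γ + (d:ℝ) - 2)
          * a ((ε ^ (κ / (2 * β)) / |s - u| ^ (1 / (2 * β))) • w)
          * |s - u| ^ (-(1 - γ) / β) := by
    rw [← intervalIntegral.integral_const_mul]
    refine intervalIntegral.integral_congr fun s _ => ?_
    beta_reduce
    rw [← intervalIntegral.integral_const_mul]
    refine intervalIntegral.integral_congr_ae ?_
    have hne : ∀ᵐ u : ℝ, u ≠ s := by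
      simpa [ae_iff] using measure_singleton s
    filter_upwards [hne] with u hu _
    beta_reduce
    exact aux_cov d hd hβ0 hγ1 hβγ hκ hε0 a
      (abs_pos.2 (sub_ne_zero.2 (Ne.symm hu)))
  refine ⟨hconj1, ?_, houter⟩
  rw [hconj1]
  exact houter
end
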